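/- Let d ≥ 3 be an integer and p a prime number. Let F = (F₁, F₂, F₃) ∈ ℚ[x,y,z]³ be the triple of homogeneous polynomials of degree d given by F₁ = x^d − p^{−(d−3)} y² z^{d−2}, F₂ = x y² z^{d−3}, F₃ = y² z^{d−2}, and for n ≥ 1 let F^{(n)} be the triple of homogeneous polynomials of degree d^n obtained by substituting F into itself n times (F^{(1)} = F, F^{(n+1)} = F^{(n)} ∘ F). Then for every n ≥ 1 the three components of F^{(n)} have no nonconstant common divisor in ℚ[x,y,z]. (This expresses that the rational self-map of ℙ² defined by F is algebraically stable, so that its first dynamical degree equals d.) -/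

import Mathlib

open MvPolynomial

/-- The homogeneous degree-`d` forms defining the rational self-map `f_{d,p}` of `ℙ²`:
`F₁ = x^d - p^{-(d-3)} y² z^{d-2}`, `F₂ = x y² z^{d-3}`, `F₃ = y² z^{d-2}`. -/
noncomputable def Fdp (d p : ℕ) : Fin 3 → MvPolynomial (Fin 3) ℚ :=
  ![X 0 ^ d - C (((p : ℚ) ^ (d - 3))⁻¹) * X 1 ^ 2 * X 2 ^ (d - 2),
    X 0 * X 1 ^ 2 * X 2 ^ (d - 3),
    X 1 ^ 2 * X 2 ^ (d - 2)]

/-- The triple of homogeneous forms of the `n`-th substitution iterate `F^{(n)}`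
(`F^{(0)}` is the identity triple, `F^{(n+1)} = F^{(n)} ∘ F`). -/
noncomputable def FdpIter (d p : ℕ) : ℕ → Fin 3 → MvPolynomial (Fin 3) ℚ
  | 0 => fun i => X i
  | n + 1 => fun i => bind₁ (Fdp d p) (FdpIter d p n i)

lemma aux_unit : ∀ {m : ℕ} (q : MvPolynomial (Fin m) ℚ), IsUnit q → ∃ a : ℚ, q = C a := by
  intro m
  induction m with
  | zero => exact fun q _ => ⟨constantCoeff q, eq_C_of_isEmpty q⟩
  | succ m ih =>
    intro q hq
    have h1 : IsUnit (finSuccEquiv ℚ m q) := hq.map _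
    obtain ⟨r, hr, hrq⟩ := Polynomial.isUnit_iff.mp h1
    obtain ⟨a, rfl⟩ := ih r hr
    refine ⟨a, ?_⟩
    have h2 := RingHom.congr_fun (finSuccEquiv_comp_C_eq_C m (R := ℚ)) a
    calc q = (finSuccEquiv ℚ m).symm (finSuccEquiv ℚ m q) :=
            ((finSuccEquiv ℚ m).symm_apply_apply q).symm
      _ = (finSuccEquiv ℚ m).symm (Polynomial.C (C a)) := by rw [hrq]
      _ = C a := h2

lemma primeX0 : Prime (X 0 : MvPolynomial (Fin 3) ℚ) := by
  have h : Prime (Polynomial.X : Polynomial (MvPolynomial (Fin 2) ℚ)) := Polynomial.prime_X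
  rw [← MulEquiv.prime_iff (finSuccEquiv ℚ 2).toMulEquiv]
  rwa [show (finSuccEquiv ℚ 2).toMulEquiv (X 0) = Polynomial.X from finSuccEquiv_X_zero]

lemma Fdp_eq (e p : ℕ) :
    Fdp (e + 3) p =
      ![X 0 ^ (e + 3) - C (((p : ℚ) ^ e)⁻¹) * X 1 ^ 2 * X 2 ^ (e + 1),
        X 0 * X 1 ^ 2 * X 2 ^ e,
        X 1 ^ 2 * X 2 ^ (e + 1)] := by
  have h2 : e + 3 - 2 = e + 1 := by omega
  have h3 : e + 3 - 3 = e := by omega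
  unfold Fdp
  rw [h2, h3]

lemma key (e p : ℕ) (hp : (p : ℚ) ≠ 0) : ∀ n, 1 ≤ n →
    (X 0 : MvPolynomial (Fin 3) ℚ) ∈
        (Ideal.span (Set.range (FdpIter (e + 3) p n))).radical ∧
      (X 1 * X 2 : MvPolynomial (Fin 3) ℚ) ∈
        (Ideal.span (Set.range (FdpIter (e + 3) p n))).radical := by
  set c : ℚ := ((p : ℚ) ^ e)⁻¹ with hc
  have hc0 : c ≠ 0 := inv_ne_zero (pow_ne_zero _ hp)
  have hF0 : Fdp (e + 3) p 0 = X 0 ^ (e + 3) - C c * X 1 ^ 2 * X 2 ^ (e + 1) := by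
    rw [Fdp_eq]; rfl
  have hF1 : Fdp (e + 3) p 1 = X 0 * X 1 ^ 2 * X 2 ^ e := by rw [Fdp_eq]; rfl
  have hF2 : Fdp (e + 3) p 2 = X 1 ^ 2 * X 2 ^ (e + 1) := by rw [Fdp_eq]; rfl
  intro n
  induction n with
  | zero => omega
  | succ n IH =>
    intro _
    rcases Nat.eq_zero_or_pos n with rfl | hn1
    · -- base case n+1 = 1
      have hmem : ∀ i, Fdp (e + 3) p i ∈ Ideal.span (Set.range (FdpIter (e + 3) p 1)) := by
        intro i
        apply Ideal.subset_span
        exact ⟨i, by simp [FdpIter]⟩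
      constructor
      · refine Ideal.mem_radical_of_pow_mem (m := e + 3) (Ideal.le_radical ?_)
        have hid : (X 0 : MvPolynomial (Fin 3) ℚ) ^ (e + 3)
            = Fdp (e + 3) p 0 + C c * Fdp (e + 3) p 2 := by
          rw [hF0, hF2]; ring
        rw [hid]
        exact Ideal.add_mem _ (hmem 0) (Ideal.mul_mem_left _ _ (hmem 2))
      · refine Ideal.mem_radical_of_pow_mem (m := e + 3) (Ideal.le_radical ?_)
        have hid : (X 1 * X 2 : MvPolynomial (Fin 3) ℚ) ^ (e + 3)
            = Fdp (e + 3) p 2 * (X 1 ^ (e + 1) * X 2 ^ 2) := by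
          rw [hF2]; ring
        rw [hid]
        exact Ideal.mul_mem_right _ _ (hmem 2)
    · -- inductive step
      obtain ⟨hx, hyz⟩ := IH hn1
      obtain ⟨k, hk⟩ := hx
      obtain ⟨j, hj⟩ := hyz
      set σ : MvPolynomial (Fin 3) ℚ →+* MvPolynomial (Fin 3) ℚ :=
        (bind₁ (Fdp (e + 3) p)).toRingHom with hσ
      have hmap : ∀ g ∈ Ideal.span (Set.range (FdpIter (e + 3) p n)),
          σ g ∈ Ideal.span (Set.range (FdpIter (e + 3) p (n + 1))) := by
        intro g hg
        have h1 := Ideal.mem_map_of_mem σ hg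
        rw [Ideal.map_span, ← Set.range_comp] at h1
        have h2 : ⇑σ ∘ FdpIter (e + 3) p n = FdpIter (e + 3) p (n + 1) := by
          funext i
          simp [FdpIter, hσ]
        rwa [h2] at h1
      have hA : Fdp (e + 3) p 0 ∈
          (Ideal.span (Set.range (FdpIter (e + 3) p (n + 1)))).radical := by
        refine ⟨k, ?_⟩
        have := hmap _ hk
        simpa [hσ, bind₁_X_right] using this
      have hB : Fdp (e + 3) p 1 * Fdp (e + 3) p 2 ∈
          (Ideal.span (Set.range (FdpIter (e + 3) p (n + 1)))).radical := by
        refine ⟨j, ?_⟩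
        have := hmap _ hj
        simpa [hσ, bind₁_X_right] using this
      set J := (Ideal.span (Set.range (FdpIter (e + 3) p (n + 1)))).radical with hJ
      rw [hF0] at hA
      rw [hF1, hF2] at hB
      have hB' : (X 0 * X 1 ^ 4 * X 2 ^ (2 * e + 1) : MvPolynomial (Fin 3) ℚ) ∈ J := by
        have : (X 0 * X 1 ^ 2 * X 2 ^ e * (X 1 ^ 2 * X 2 ^ (e + 1)) : MvPolynomial (Fin 3) ℚ)
            = X 0 * X 1 ^ 4 * X 2 ^ (2 * e + 1) := by ring
        rwa [this] at hB
      obtain ⟨T, hT⟩ := sub_dvd_pow_sub_pow (R := MvPolynomial (Fin 3) ℚ)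
        (X 0 ^ (e + 3)) (C c * X 1 ^ 2 * X 2 ^ (e + 1)) 4
      have hx0 : (X 0 : MvPolynomial (Fin 3) ℚ) ∈ J := by
        refine Ideal.mem_radical_of_pow_mem (m := 4 * e + 13) ?_
        have hid : (X 0 : MvPolynomial (Fin 3) ℚ) ^ (4 * e + 13)
            = X 0 * ((X 0 ^ (e + 3)) ^ 4 - (C c * X 1 ^ 2 * X 2 ^ (e + 1)) ^ 4)
              + C c ^ 4 * (X 0 * X 1 ^ 4 * X 2 ^ (2 * e + 1)) * (X 1 ^ 4 * X 2 ^ (2 * e + 3)) := by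
          ring
        rw [hid, hT]
        exact Ideal.add_mem _
          (Ideal.mul_mem_left _ _ (Ideal.mul_mem_right _ _ hA))
          (Ideal.mul_mem_right _ _ (Ideal.mul_mem_left _ _ hB'))
      have hv : (X 1 ^ 2 * X 2 ^ (e + 1) : MvPolynomial (Fin 3) ℚ) ∈ J := by
        have h1 : (C c * (X 1 ^ 2 * X 2 ^ (e + 1)) : MvPolynomial (Fin 3) ℚ)
            = X 0 ^ (e + 3) - (X 0 ^ (e + 3) - C c * X 1 ^ 2 * X 2 ^ (e + 1)) := by ring
        have h2 : (C c * (X 1 ^ 2 * X 2 ^ (e + 1)) : MvPolynomial (Fin 3) ℚ) ∈ J := by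
          rw [h1]
          exact Ideal.sub_mem _ (Ideal.pow_mem_of_mem _ hx0 _ (by omega)) hA
        have h3 : (X 1 ^ 2 * X 2 ^ (e + 1) : MvPolynomial (Fin 3) ℚ)
            = C c⁻¹ * (C c * (X 1 ^ 2 * X 2 ^ (e + 1))) := by
          rw [← mul_assoc, ← C_mul, inv_mul_cancel₀ hc0, C_1, one_mul]
        rw [h3]
        exact Ideal.mul_mem_left _ _ h2
      refine ⟨hx0, ?_⟩
      refine Ideal.mem_radical_of_pow_mem (m := e + 3) ?_
      have hid : (X 1 * X 2 : MvPolynomial (Fin 3) ℚ) ^ (e + 3)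
          = X 1 ^ 2 * X 2 ^ (e + 1) * (X 1 ^ (e + 1) * X 2 ^ 2) := by ring
      rw [hid]
      exact Ideal.mul_mem_right _ _ hv

/-- For `d ≥ 3`, `p` prime and every `n ≥ 1`, the three components of `F^{(n)}` have no
nonconstant common divisor in `ℚ[x,y,z]` (algebraic stability of `f_{d,p}`). -/
theorem stmt14 (d p : ℕ) (hd : 3 ≤ d) (hp : p.Prime) (n : ℕ) (hn : 1 ≤ n)
    (q : MvPolynomial (Fin 3) ℚ) (hq : ∀ i, q ∣ FdpIter d p n i) :
    ∃ a : ℚ, q = C a := by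
  obtain ⟨e, rfl⟩ : ∃ e, d = e + 3 := ⟨d - 3, by omega⟩
  have hp0 : (p : ℚ) ≠ 0 := Nat.cast_ne_zero.mpr hp.pos.ne'
  obtain ⟨hx, hyz⟩ := key e p hp0 n hn
  have hle : Ideal.span (Set.range (FdpIter (e + 3) p n)) ≤ Ideal.span {q} := by
    rw [Ideal.span_le]
    rintro _ ⟨i, rfl⟩
    exact Ideal.mem_span_singleton.mpr (hq i)
  have hrad := Ideal.radical_mono hle
  obtain ⟨k, hk⟩ := hrad hx
  obtain ⟨j, hj⟩ := hrad hyz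
  have hqx : q ∣ X 0 ^ k := Ideal.mem_span_singleton.mp hk
  have hqyz : q ∣ (X 1 * X 2) ^ j := Ideal.mem_span_singleton.mp hj
  obtain ⟨i, hi, hassoc⟩ := (dvd_prime_pow primeX0 k).mp hqx
  rcases Nat.eq_zero_or_pos i with rfl | hipos
  · rw [pow_zero] at hassoc
    exact aux_unit q (hassoc.symm.isUnit isUnit_one)
  · exfalso
    have hX0q : (X 0 : MvPolynomial (Fin 3) ℚ) ∣ q :=
      dvd_trans (dvd_pow_self _ hipos.ne') hassoc.symm.dvd
    have h1 : (X 0 : MvPolynomial (Fin 3) ℚ) ∣ X 1 * X 2 :=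
      primeX0.dvd_of_dvd_pow (hX0q.trans hqyz)
    rcases (primeX0.2.2 _ _ h1) with h | h
    · obtain ⟨t, ht⟩ := h
      have := congrArg (eval ![0, 1, 1]) ht
      simp at this
    · obtain ⟨t, ht⟩ := h
      have := congrArg (eval ![0, 1, 1]) ht
      simp at this
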